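/- arXiv:1703.06401 — 9 statements merged into one kernel-verified Lean document; each statement's English description precedes it below -/
import Mathlib

section
/- For any real or complex sequence (a_k), and any positive integer n, the double sum ∑_{k=1}^n (1/k) ∑_{j=1}^k (-1)^j C(k,j) a_j equals ∑_{k=1}^n (-1)^k C(n,k) a_k / k. -/
theorem stmt_0 (a : ℕ → ℂ) (n : ℕ) (hn : 1 ≤ n) :
    ∑ k ∈ Finset.Icc 1 n, (1 / (k : ℂ)) * ∑ j ∈ Finset.Icc 1 k, (-1) ^ j * (Nat.choose k j : ℂ) * a j
      = ∑ k ∈ Finset.Icc 1 n, (-1) ^ k * (Nat.choose n k : ℂ) * a k / k := by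
  induction n with
  | zero => omega
  | succ n ih =>
    rcases Nat.eq_zero_or_pos n with rfl | hn'
    · norm_num
    · rw [Finset.sum_Icc_succ_top (by omega : 1 ≤ n + 1), ih hn']
      have hext : ∑ k ∈ Finset.Icc 1 n, (-1 : ℂ) ^ k * (Nat.choose n k : ℂ) * a k / k
          = ∑ k ∈ Finset.Icc 1 (n + 1), (-1 : ℂ) ^ k * (Nat.choose n k : ℂ) * a k / k := by
        rw [Finset.sum_Icc_succ_top (by omega : 1 ≤ n + 1)]
        simp [Nat.choose_succ_self]
      rw [hext, Finset.mul_sum, ← Finset.sum_add_distrib]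
      refine Finset.sum_congr rfl fun k hk => ?_
      simp only [Finset.mem_Icc] at hk
      obtain ⟨m, rfl⟩ : ∃ m, k = m + 1 := ⟨k - 1, by omega⟩
      have hpascal : (n + 1).choose (m + 1) = n.choose m + n.choose (m + 1) :=
        Nat.choose_succ_succ n m
      have hmul : (n + 1) * n.choose m = (n + 1).choose (m + 1) * (m + 1) :=
        Nat.add_one_mul_choose_eq n m
      have h1 : ((n + 1 : ℕ).choose (m + 1) : ℂ) = (n.choose m : ℂ) + (n.choose (m + 1) : ℂ) := by
        exact_mod_cast congrArg (Nat.cast : ℕ → ℂ) hpascal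
      have h2 : ((n : ℂ) + 1) * (n.choose m : ℂ) = ((n + 1 : ℕ).choose (m + 1) : ℂ) * ((m : ℂ) + 1) := by
        exact_mod_cast congrArg (Nat.cast : ℕ → ℂ) hmul
      have hm1 : ((m : ℂ) + 1) ≠ 0 := by exact_mod_cast Nat.succ_ne_zero m
      have hn1 : ((n : ℂ) + 1) ≠ 0 := by exact_mod_cast Nat.succ_ne_zero n
      push_cast
      rw [h1] at h2 ⊢
      field_simp
      linear_combination (-a (m+1)) * h2
end

section
/- For all positive integers n and m, S_n(m) = ∑_{k=1}^n S_k(m-1)/k, where S_n(m) = ∑_{k=1}^n C(n,k) (-1)^{k-1}/k^m and S_n(0) = 1. -/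
lemma per_term (n j p : ℕ) :
    (Nat.choose (n+1) (j+1) : ℝ) * (-1) ^ j / ((j:ℝ)+1) ^ (p+1)
      = (Nat.choose n (j+1) : ℝ) * (-1) ^ j / ((j:ℝ)+1) ^ (p+1)
        + (Nat.choose (n+1) (j+1) : ℝ) * (-1) ^ j / ((j:ℝ)+1) ^ p / ((n:ℝ)+1) := by
  have hc : ((n:ℝ)+1) * (Nat.choose n j : ℝ) = (Nat.choose (n+1) (j+1) : ℝ) * ((j:ℝ)+1) := by
    exact_mod_cast congrArg (Nat.cast (R := ℝ)) (Nat.add_one_mul_choose_eq n j)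
  have hp : (Nat.choose (n+1) (j+1) : ℝ)
      = (Nat.choose n j : ℝ) + (Nat.choose n (j+1) : ℝ) := by
    exact_mod_cast congrArg (Nat.cast (R := ℝ)) (Nat.choose_succ_succ n j)
  have key : (Nat.choose n j : ℝ) * (-1)^j / ((j:ℝ)+1)^(p+1)
      = (Nat.choose (n+1) (j+1) : ℝ) * (-1)^j / ((j:ℝ)+1)^p / ((n:ℝ)+1) := by
    rw [div_div, div_eq_div_iff (by positivity) (by positivity), pow_succ]
    linear_combination ((-1:ℝ)^j * ((j:ℝ)+1)^p) * hc
  linear_combination key + ((-1:ℝ)^j / ((j:ℝ)+1)^(p+1)) * hp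

lemma key_step (n m : ℕ) (hm : 1 ≤ m) :
    ∑ k ∈ Finset.Icc 1 (n+1), (Nat.choose (n+1) k : ℝ) * (-1) ^ (k - 1) / (k : ℝ) ^ m
      = (∑ k ∈ Finset.Icc 1 n, (Nat.choose n k : ℝ) * (-1) ^ (k - 1) / (k : ℝ) ^ m)
        + (∑ k ∈ Finset.Icc 1 (n+1),
            (Nat.choose (n+1) k : ℝ) * (-1) ^ (k - 1) / (k : ℝ) ^ (m - 1)) / ((n : ℝ) + 1) := by
  obtain ⟨p, rfl⟩ : ∃ p, m = p + 1 := ⟨m - 1, (Nat.succ_pred_eq_of_pos hm).symm⟩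
  have h1 : ∑ k ∈ Finset.Icc 1 (n+1), (Nat.choose (n+1) k : ℝ) * (-1) ^ (k-1) / (k : ℝ) ^ (p+1)
      = ∑ k ∈ Finset.Icc 1 (n+1),
          ((Nat.choose n k : ℝ) * (-1) ^ (k-1) / (k : ℝ) ^ (p+1)
            + (Nat.choose (n+1) k : ℝ) * (-1) ^ (k-1) / (k : ℝ) ^ (p+1-1) / ((n:ℝ) + 1)) := by
    apply Finset.sum_congr rfl
    intro k hk
    obtain ⟨j, rfl⟩ : ∃ j, k = j + 1 :=
      ⟨k - 1, (Nat.succ_pred_eq_of_pos (Finset.mem_Icc.mp hk).1).symm⟩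
    simp only [Nat.add_sub_cancel]
    push_cast
    exact per_term n j p
  rw [h1, Finset.sum_add_distrib, Finset.sum_div]
  congr 1
  · rw [Finset.sum_Icc_succ_top (by omega : 1 ≤ n + 1)]
    simp [Nat.choose_eq_zero_of_lt (by omega : n < n + 1)]

theorem stmt_2 (n m : ℕ) (hn : 1 ≤ n) (hm : 1 ≤ m) :
    ∑ k ∈ Finset.Icc 1 n, (Nat.choose n k : ℝ) * (-1) ^ (k - 1) / (k : ℝ) ^ m
      = ∑ k ∈ Finset.Icc 1 n,
          (∑ j ∈ Finset.Icc 1 k, (Nat.choose k j : ℝ) * (-1) ^ (j - 1) / (j : ℝ) ^ (m - 1)) / k := by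
  induction n with
  | zero => omega
  | succ n ih =>
    rcases Nat.eq_zero_or_pos n with rfl | hn'
    · simp
    · rw [key_step n m hm, ih hn',
        Finset.sum_Icc_succ_top (by omega : 1 ≤ n + 1)
          (fun k => (∑ j ∈ Finset.Icc 1 k,
            (Nat.choose k j : ℝ) * (-1) ^ (j - 1) / (j : ℝ) ^ (m - 1)) / k)]
      push_cast
      ring
end

section
/- For all positive integers n and m, ∑_{k=1}^n (-1)^{k-1} C(n,k) S_k(m)/k = H_n^{(m+1)}, where S_k(m) = ∑_{j=1}^k C(k,j)(-1)^{j-1}/j^m and H_n^{(r)} = ∑_{k=1}^n 1/k^r. -/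
open Finset

lemma factj (j : ℕ) (hj : 1 ≤ j) : (Nat.factorial j : ℝ) = j * Nat.factorial (j - 1) := by
  obtain ⟨j', rfl⟩ := Nat.exists_eq_add_of_le hj
  rw [Nat.add_comm 1 j']
  simp [Nat.factorial_succ]

lemma auxA (M : ℕ) : ∀ j : ℕ, 1 ≤ j →
    ∑ i ∈ range (M + 1), (-1 : ℝ) ^ i * (Nat.choose M i : ℝ) / (j + i)
      = (Nat.factorial M : ℝ) * (Nat.factorial (j - 1)) / (Nat.factorial (M + j)) := by
  induction M with
  | zero =>
      intro j hj
      have hjpos : (0:ℝ) < j := by exact_mod_cast hj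
      simp only [range_one, sum_singleton, Nat.choose_self, Nat.cast_one, pow_zero, zero_add,
        Nat.factorial_zero, one_mul, Nat.cast_zero, add_zero, one_div]
      rw [factj j hj]
      have h2 : (0:ℝ) < Nat.factorial (j-1) := by positivity
      field_simp
  | succ M ih =>
      intro j hj
      have hjpos : (0:ℝ) < j := by exact_mod_cast hj
      have key : ∑ i ∈ range (M + 1 + 1), (-1 : ℝ) ^ i * (Nat.choose (M+1) i : ℝ) / (j + i)
          = (∑ i ∈ range (M + 1), (-1 : ℝ) ^ i * (Nat.choose M i : ℝ) / (j + i))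
            - ∑ i ∈ range (M + 1), (-1 : ℝ) ^ i * (Nat.choose M i : ℝ) / ((j:ℝ) + 1 + i) := by
        have split : ∀ i ∈ range (M + 2), (-1 : ℝ) ^ i * (Nat.choose (M+1) i : ℝ) / (j + i)
            = (-1 : ℝ) ^ i * (Nat.choose M i : ℝ) / (j + i)
              + (if i = 0 then 0 else (-1 : ℝ) ^ i * (Nat.choose M (i-1) : ℝ) / (j + i)) := by
          intro i _
          cases i with
          | zero => simp
          | succ i =>
              rw [if_neg (Nat.succ_ne_zero i), Nat.succ_sub_one, Nat.choose_succ_succ,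
                Nat.cast_add]
              ring
        rw [sum_congr rfl split, sum_add_distrib]
        congr 1
        · rw [sum_range_succ, Nat.choose_succ_self]; simp
        · rw [Finset.sum_range_succ']
          norm_num [Nat.succ_sub_one]
          rw [← Finset.sum_neg_distrib]
          refine Finset.sum_congr rfl fun i _ => ?_
          push_cast
          ring
      have ih2 : ∑ i ∈ range (M + 1), (-1 : ℝ) ^ i * (Nat.choose M i : ℝ) / ((j:ℝ) + 1 + i)
          = (Nat.factorial M : ℝ) * (Nat.factorial j) / (Nat.factorial (M + (j+1))) := by
        have := ih (j+1) (by omega)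
        push_cast at this ⊢
        simpa using this
      rw [key, ih j hj, ih2]
      have e1 : M + 1 + j = (M + j) + 1 := by omega
      have e2 : M + (j + 1) = (M + j) + 1 := by omega
      rw [e1, e2]
      have hf : (0:ℝ) < Nat.factorial (M + j) := by positivity
      have hf2 : (0:ℝ) < Nat.factorial (j - 1) := by positivity
      push_cast [Nat.factorial_succ, factj j hj]
      field_simp
      ring

lemma innerSum (n j : ℕ) (hj : 1 ≤ j) (hjn : j ≤ n) :
    ∑ k ∈ Icc j n, (-1:ℝ)^(k-1) * (Nat.choose n k : ℝ) * (Nat.choose k j : ℝ) / k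
      = (-1:ℝ)^(j-1) / j := by
  have hM : n + 1 - j = (n - j) + 1 := by omega
  rw [← Finset.Ico_add_one_right_eq_Icc, Finset.sum_Ico_eq_sum_range, hM]
  have step : ∀ i ∈ range (n - j + 1),
      (-1:ℝ)^(j+i-1) * (Nat.choose n (j+i) : ℝ) * (Nat.choose (j+i) j : ℝ) / (↑(j+i))
        = ((-1:ℝ)^(j-1) * (Nat.choose n j : ℝ))
            * ((-1:ℝ)^i * (Nat.choose (n-j) i : ℝ) / ((j:ℝ)+i)) := by
    intro i hi
    have hin : j + i ≤ n := by simp only [mem_range] at hi; omega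
    have hc : Nat.choose n (j+i) * Nat.choose (j+i) j = Nat.choose n j * Nat.choose (n-j) i := by
      have := Nat.choose_mul (n := n) (Nat.le_add_right j i)
      simpa using this
    have hc' : (Nat.choose n (j+i) : ℝ) * (Nat.choose (j+i) j : ℝ)
        = (Nat.choose n j : ℝ) * (Nat.choose (n-j) i : ℝ) := by exact_mod_cast congrArg Nat.cast hc
    have hsign : j + i - 1 = (j - 1) + i := by omega
    rw [hsign, pow_add]
    push_cast
    rw [mul_assoc ((-1:ℝ)^(j-1)), mul_assoc, mul_assoc, mul_assoc, hc']
    ring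
  rw [sum_congr rfl step, ← mul_sum, auxA (n-j) j hj]
  have hnj : n - j + j = n := by omega
  rw [hnj]
  have hch : (Nat.choose n j : ℝ) * (Nat.factorial j : ℝ) * (Nat.factorial (n-j) : ℝ)
      = (Nat.factorial n : ℝ) := by exact_mod_cast Nat.choose_mul_factorial_mul_factorial hjn
  rw [factj j hj] at hch
  have h1 : (0:ℝ) < Nat.factorial n := by positivity
  have h2 : (0:ℝ) < Nat.factorial (j-1) := by positivity
  have h3 : (0:ℝ) < Nat.factorial (n-j) := by positivity
  have hjpos : (0:ℝ) < j := by exact_mod_cast hj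
  field_simp
  linear_combination hch

theorem stmt_6 (n m : ℕ) (hn : 1 ≤ n) (hm : 1 ≤ m) :
    ∑ k ∈ Finset.Icc 1 n, (-1 : ℝ) ^ (k - 1) * (Nat.choose n k : ℝ) *
        (∑ j ∈ Finset.Icc 1 k, (Nat.choose k j : ℝ) * (-1) ^ (j - 1) / (j : ℝ) ^ m) / k
      = ∑ k ∈ Finset.Icc 1 n, (1 : ℝ) / (k : ℝ) ^ (m + 1) := by
  have expand : ∀ k ∈ Icc 1 n,
      (-1 : ℝ) ^ (k - 1) * (Nat.choose n k : ℝ) *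
          (∑ j ∈ Icc 1 k, (Nat.choose k j : ℝ) * (-1) ^ (j - 1) / (j : ℝ) ^ m) / k
        = ∑ j ∈ Icc 1 k, ((-1:ℝ) ^ (j-1) / (j:ℝ)^m)
            * ((-1:ℝ)^(k-1) * (Nat.choose n k : ℝ) * (Nat.choose k j : ℝ) / k) := by
    intro k _
    rw [Finset.mul_sum, Finset.sum_div]
    refine sum_congr rfl fun j _ => ?_
    ring
  rw [sum_congr rfl expand,
    Finset.sum_comm' (s := Icc 1 n) (t := fun k => Icc 1 k) (t' := Icc 1 n)
      (s' := fun j => Icc j n) (by intro k j; simp only [mem_Icc]; omega)]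
  refine sum_congr rfl fun j hj => ?_
  simp only [mem_Icc] at hj
  rw [← mul_sum, innerSum n j hj.1 hj.2]
  have h1 : ((-1:ℝ)^(j-1)) * ((-1:ℝ)^(j-1)) = 1 := by rw [← mul_pow]; norm_num
  rw [div_mul_div_comm, h1, ← pow_succ]
end

section
/- For all positive integers n and m, ∑_{k=1}^n (-1)^{k-1} C(n,k) H_k^{(m+1)} = S_n(m)/n, where S_n(m) = ∑_{k=1}^n C(n,k)(-1)^{k-1}/k^m. -/
open Finset

lemma prefix_sum_aux (n : ℕ) (hn : 1 ≤ n) : ∀ i : ℕ,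
    ∑ k ∈ range (i + 1), (-1 : ℝ) ^ k * (n.choose k : ℝ)
      = (-1 : ℝ) ^ i * ((n - 1).choose i : ℝ) := by
  intro i
  induction i with
  | zero => simp
  | succ i ih =>
    rw [Finset.sum_range_succ, ih]
    have hpascal : (n.choose (i + 1) : ℝ)
        = ((n - 1).choose i : ℝ) + ((n - 1).choose (i + 1) : ℝ) := by
      have h : n = (n - 1) + 1 := by omega
      rw [h, Nat.choose_succ_succ]
      push_cast; ring
    rw [hpascal]; ring

lemma tail_sum (n j : ℕ) (hn : 1 ≤ n) (hj : 1 ≤ j) (hjn : j ≤ n) :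
    ∑ k ∈ Finset.Icc j n, (-1 : ℝ) ^ (k - 1) * (n.choose k : ℝ)
      = (-1 : ℝ) ^ (j - 1) * ((n - 1).choose (j - 1) : ℝ) := by
  have htot : ∑ k ∈ range (n + 1), (-1 : ℝ) ^ k * (n.choose k : ℝ) = 0 := by
    rw [prefix_sum_aux n hn n]
    have : (n - 1).choose n = 0 := Nat.choose_eq_zero_of_lt (by omega)
    simp [this]
  have hsplit : ∑ k ∈ Finset.Ico 0 j, (-1 : ℝ) ^ k * (n.choose k : ℝ)
      + ∑ k ∈ Finset.Ico j (n + 1), (-1 : ℝ) ^ k * (n.choose k : ℝ) = 0 := by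
    rw [Finset.sum_Ico_consecutive _ (by omega) (by omega), ← Finset.range_eq_Ico]
    exact htot
  have hpre : ∑ k ∈ Finset.Ico 0 j, (-1 : ℝ) ^ k * (n.choose k : ℝ)
      = (-1 : ℝ) ^ (j - 1) * ((n - 1).choose (j - 1) : ℝ) := by
    have h : j = (j - 1) + 1 := by omega
    rw [← Finset.range_eq_Ico]
    conv_lhs => rw [h]
    rw [prefix_sum_aux n hn]
  have hIcc : Finset.Icc j n = Finset.Ico j (n + 1) := by
    rw [Finset.Ico_add_one_right_eq_Icc]
  rw [hIcc]
  have hneg : ∑ k ∈ Finset.Ico j (n + 1), (-1 : ℝ) ^ (k - 1) * (n.choose k : ℝ)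
      = -∑ k ∈ Finset.Ico j (n + 1), (-1 : ℝ) ^ k * (n.choose k : ℝ) := by
    rw [← Finset.sum_neg_distrib]
    apply Finset.sum_congr rfl
    intro k hk
    have hk1 : 1 ≤ k := le_trans hj (Finset.mem_Ico.mp hk).1
    have : k = (k - 1) + 1 := by omega
    rw [this]; simp; ring
  rw [hneg]
  linarith [hsplit, hpre]

theorem stmt_7 (n m : ℕ) (hn : 1 ≤ n) (hm : 1 ≤ m) :
    ∑ k ∈ Finset.Icc 1 n, (-1 : ℝ) ^ (k - 1) * (Nat.choose n k : ℝ) *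
        (∑ j ∈ Finset.Icc 1 k, (1 : ℝ) / (j : ℝ) ^ (m + 1))
      = (∑ k ∈ Finset.Icc 1 n, (Nat.choose n k : ℝ) * (-1) ^ (k - 1) / (k : ℝ) ^ m) / n := by
  have key : ∀ k ∈ Finset.Icc 1 n,
      (-1 : ℝ) ^ (k - 1) * (Nat.choose n k : ℝ) *
        (∑ j ∈ Finset.Icc 1 k, (1 : ℝ) / (j : ℝ) ^ (m + 1))
      = ∑ j ∈ Finset.Icc 1 k,
          (-1 : ℝ) ^ (k - 1) * (Nat.choose n k : ℝ) * ((1 : ℝ) / (j : ℝ) ^ (m + 1)) := by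
    intro k _; rw [Finset.mul_sum]
  rw [Finset.sum_congr rfl key]
  -- swap sums
  have hswap : ∑ k ∈ Finset.Icc 1 n, ∑ j ∈ Finset.Icc 1 k,
      (-1 : ℝ) ^ (k - 1) * (Nat.choose n k : ℝ) * ((1 : ℝ) / (j : ℝ) ^ (m + 1))
      = ∑ j ∈ Finset.Icc 1 n, ∑ k ∈ Finset.Icc j n,
      (-1 : ℝ) ^ (k - 1) * (Nat.choose n k : ℝ) * ((1 : ℝ) / (j : ℝ) ^ (m + 1)) := by
    have h1 : ∀ a : ℕ, Finset.Icc a n = Finset.Ico a (n + 1) := fun a => by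
      rw [Finset.Ico_add_one_right_eq_Icc]
    simp_rw [h1]
    have h2 : ∀ k, Finset.Icc 1 k = Finset.Ico 1 (k + 1) := fun k => by
      rw [Finset.Ico_add_one_right_eq_Icc]
    simp_rw [h2]
    exact (Finset.sum_Ico_Ico_comm 1 (n + 1)
      (fun j k => (-1 : ℝ) ^ (k - 1) * (Nat.choose n k : ℝ) * ((1 : ℝ) / (j : ℝ) ^ (m + 1)))).symm
  rw [hswap]
  rw [Finset.sum_div]
  apply Finset.sum_congr rfl
  intro j hj
  obtain ⟨hj1, hjn⟩ := Finset.mem_Icc.mp hj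
  rw [← Finset.sum_mul, tail_sum n j hn hj1 hjn]
  -- now: (-1)^(j-1) * C(n-1, j-1) * (1 / j^(m+1)) = C(n,j) * (-1)^(j-1) / j^m / n
  have hchoose : (n : ℝ) * ((n - 1).choose (j - 1) : ℝ) = (n.choose j : ℝ) * j := by
    have h := Nat.add_one_mul_choose_eq (n - 1) (j - 1)
    have h1 : n - 1 + 1 = n := by omega
    have h2 : j - 1 + 1 = j := by omega
    rw [h1, h2] at h
    exact_mod_cast h
  have hj0 : (j : ℝ) ≠ 0 := by positivity
  have hn0 : (n : ℝ) ≠ 0 := by positivity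
  have hC : ((n - 1).choose (j - 1) : ℝ) = (n.choose j : ℝ) * j / n := by
    field_simp
    linarith [hchoose]
  rw [hC, pow_succ]
  field_simp
end

section
/- For every positive integer n, ∑_{k=1}^n (-1)^{k-1} C(n,k) H_k/k = H_n^{(2)}. -/
open Finset

private noncomputable def hsum (k : ℕ) : ℝ := ∑ j ∈ Finset.Icc 1 k, (1 : ℝ) / j

private lemma hsum_zero : hsum 0 = 0 := by simp [hsum]

private lemma hsum_succ (k : ℕ) : hsum (k+1) = hsum k + 1/((k:ℝ)+1) := by
  rw [hsum, hsum, Finset.sum_Icc_succ_top (by omega)]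
  push_cast; ring

private lemma alt_choose_succ (N : ℕ) :
    ∑ j ∈ Finset.range (N+1), (-1:ℝ)^j * (((N+1).choose (j+1) : ℕ) : ℝ) = 1 := by
  have h4 := Int.alternating_sum_range_choose (n := N+1)
  rw [if_neg (Nat.succ_ne_zero N)] at h4
  have h5 : ∑ i ∈ Finset.range (N+2), (-1:ℝ)^i * (((N+1).choose i : ℕ) : ℝ) = 0 := by
    exact_mod_cast h4
  rw [Finset.sum_range_succ'] at h5
  have h6 : ∑ j ∈ Finset.range (N+1), (-1:ℝ)^j * (((N+1).choose (j+1) : ℕ) : ℝ)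
      = -∑ j ∈ Finset.range (N+1), (-1:ℝ)^(j+1) * (((N+1).choose (j+1) : ℕ) : ℝ) := by
    rw [← Finset.sum_neg_distrib]
    exact Finset.sum_congr rfl fun j _ => by ring
  rw [h6]
  simp at h5 ⊢
  linarith

private lemma L1 (N : ℕ) :
    ∑ j ∈ Finset.range (N+1), (-1:ℝ)^j * ((N.choose j : ℕ) : ℝ) / ((j:ℝ)+1) = 1/((N:ℝ)+1) := by
  have key : ∀ j, (-1:ℝ)^j * ((N.choose j : ℕ) : ℝ) / ((j:ℝ)+1)
      = (-1:ℝ)^j * (((N+1).choose (j+1) : ℕ) : ℝ) / ((N:ℝ)+1) := by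
    intro j
    have h2 : ((N:ℝ)+1) * ((N.choose j : ℕ) : ℝ)
        = (((N+1).choose (j+1) : ℕ) : ℝ) * ((j:ℝ)+1) := by
      exact_mod_cast Nat.add_one_mul_choose_eq N j
    have hj : ((j:ℝ)+1) ≠ 0 := by positivity
    have hN : ((N:ℝ)+1) ≠ 0 := by positivity
    rw [div_eq_div_iff hj hN]
    linear_combination (-1:ℝ)^j * h2
  rw [Finset.sum_congr rfl (fun j _ => key j), ← Finset.sum_div, alt_choose_succ]

private lemma L2 (N : ℕ) :
    ∑ j ∈ Finset.range (N+1), (-1:ℝ)^j * (((N+1).choose (j+1) : ℕ) : ℝ) * hsum (j+1)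
      = 1/((N:ℝ)+1) := by
  have split : ∑ j ∈ Finset.range (N+1), (-1:ℝ)^j * (((N+1).choose (j+1) : ℕ) : ℝ) * hsum (j+1)
      = (∑ j ∈ Finset.range (N+1), (-1:ℝ)^j * ((N.choose j : ℕ) : ℝ) * hsum (j+1))
        + ∑ j ∈ Finset.range (N+1), (-1:ℝ)^j * ((N.choose (j+1) : ℕ) : ℝ) * hsum (j+1) := by
    rw [← Finset.sum_add_distrib]
    refine Finset.sum_congr rfl fun j _ => ?_
    have : (((N+1).choose (j+1) : ℕ) : ℝ) = ((N.choose j : ℕ) : ℝ) + ((N.choose (j+1) : ℕ) : ℝ) := by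
      exact_mod_cast Nat.choose_succ_succ (n := N) (k := j)
    rw [this]; ring
  have first : ∑ j ∈ Finset.range (N+1), (-1:ℝ)^j * ((N.choose j : ℕ) : ℝ) * hsum (j+1)
      = (∑ j ∈ Finset.range (N+1), (-1:ℝ)^j * ((N.choose j : ℕ) : ℝ) * hsum j) + 1/((N:ℝ)+1) := by
    have step : ∀ j, (-1:ℝ)^j * ((N.choose j : ℕ) : ℝ) * hsum (j+1)
        = (-1:ℝ)^j * ((N.choose j : ℕ) : ℝ) * hsum j
          + (-1:ℝ)^j * ((N.choose j : ℕ) : ℝ) / ((j:ℝ)+1) := by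
      intro j; rw [hsum_succ]; ring
    rw [Finset.sum_congr rfl (fun j _ => step j), Finset.sum_add_distrib, L1 N]
  have shift : ∑ j ∈ Finset.range (N+1), (-1:ℝ)^j * ((N.choose (j+1) : ℕ) : ℝ) * hsum (j+1)
      = ∑ m ∈ Finset.range (N+1), (-1:ℝ)^(m-1) * ((N.choose m : ℕ) : ℝ) * hsum m := by
    rw [Finset.sum_range_succ' (f := fun m => (-1:ℝ)^(m-1) * ((N.choose m : ℕ) : ℝ) * hsum m) N,
      Finset.sum_range_succ]
    simp [hsum_zero, Nat.choose_succ_self]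
  have cancel : (∑ j ∈ Finset.range (N+1), (-1:ℝ)^j * ((N.choose j : ℕ) : ℝ) * hsum j)
      + ∑ m ∈ Finset.range (N+1), (-1:ℝ)^(m-1) * ((N.choose m : ℕ) : ℝ) * hsum m = 0 := by
    rw [← Finset.sum_add_distrib]
    refine Finset.sum_eq_zero fun m _ => ?_
    match m with
    | 0 => simp [hsum_zero]
    | k+1 => simp only [Nat.add_sub_cancel, pow_succ]; ring
  rw [split, first, shift]
  linarith [cancel]

private lemma Skey (n : ℕ) :
    ∑ k ∈ Finset.range (n+1), (-1:ℝ)^(k-1) * ((n.choose k : ℕ) : ℝ) * hsum k / (k:ℝ)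
      = ∑ k ∈ Finset.range (n+1), 1/((k:ℝ))^2 := by
  induction n with
  | zero => simp [hsum_zero]
  | succ n ih =>
    rw [Finset.sum_range_succ (f := fun k => 1/((k:ℝ))^2), ← ih]
    rw [Finset.sum_range_succ' (f := fun k => (-1:ℝ)^(k-1) * (((n+1).choose k : ℕ) : ℝ) * hsum k / (k:ℝ))]
    have pascal : ∀ j, (-1:ℝ)^((j+1)-1) * (((n+1).choose (j+1) : ℕ) : ℝ) * hsum (j+1) / ((j+1:ℕ):ℝ)
        = (-1:ℝ)^j * ((n.choose j : ℕ) : ℝ) * hsum (j+1) / ((j:ℝ)+1)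
          + (-1:ℝ)^((j+1)-1) * ((n.choose (j+1) : ℕ) : ℝ) * hsum (j+1) / ((j+1:ℕ):ℝ) := by
      intro j
      have : (((n+1).choose (j+1) : ℕ) : ℝ) = ((n.choose j : ℕ) : ℝ) + ((n.choose (j+1) : ℕ) : ℝ) := by
        exact_mod_cast Nat.choose_succ_succ (n := n) (k := j)
      rw [this]
      push_cast
      ring
    rw [Finset.sum_congr rfl (fun j _ => pascal j), Finset.sum_add_distrib]
    have D : ∑ j ∈ Finset.range (n+1), (-1:ℝ)^j * ((n.choose j : ℕ) : ℝ) * hsum (j+1) / ((j:ℝ)+1)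
        = 1/((n:ℝ)+1)^2 := by
      have key : ∀ j, (-1:ℝ)^j * ((n.choose j : ℕ) : ℝ) * hsum (j+1) / ((j:ℝ)+1)
          = ((-1:ℝ)^j * (((n+1).choose (j+1) : ℕ) : ℝ) * hsum (j+1)) / ((n:ℝ)+1) := by
        intro j
        have h2 : ((n:ℝ)+1) * ((n.choose j : ℕ) : ℝ)
            = (((n+1).choose (j+1) : ℕ) : ℝ) * ((j:ℝ)+1) := by
          exact_mod_cast Nat.add_one_mul_choose_eq n j
        have hj : ((j:ℝ)+1) ≠ 0 := by positivity
        have hN : ((n:ℝ)+1) ≠ 0 := by positivity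
        rw [div_eq_div_iff hj hN]
        linear_combination (-1:ℝ)^j * hsum (j+1) * h2
      rw [Finset.sum_congr rfl (fun j _ => key j), ← Finset.sum_div, L2 n]
      field_simp
    have backshift : ∑ j ∈ Finset.range (n+1),
          (-1:ℝ)^((j+1)-1) * ((n.choose (j+1) : ℕ) : ℝ) * hsum (j+1) / ((j+1:ℕ):ℝ)
        = ∑ k ∈ Finset.range (n+1), (-1:ℝ)^(k-1) * ((n.choose k : ℕ) : ℝ) * hsum k / (k:ℝ) := by
      rw [Finset.sum_range_succ' (f := fun k => (-1:ℝ)^(k-1) * ((n.choose k : ℕ) : ℝ) * hsum k / (k:ℝ)),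
        Finset.sum_range_succ]
      simp [hsum_zero, Nat.choose_succ_self]
    rw [D, backshift]
    simp only [hsum_zero, mul_zero, zero_div, add_zero]
    push_cast
    linarith

private lemma icc_eq_range (n : ℕ) (f : ℕ → ℝ) (h0 : f 0 = 0) :
    ∑ k ∈ Finset.Icc 1 n, f k = ∑ k ∈ Finset.range (n+1), f k := by
  refine Finset.sum_subset (fun x hx => ?_) (fun x hx hx' => ?_)
  · simp only [Finset.mem_Icc] at hx; simp only [Finset.mem_range]; omega
  · simp only [Finset.mem_range] at hx
    simp only [Finset.mem_Icc] at hx'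
    have : x = 0 := by omega
    rw [this, h0]

theorem stmt_8 (n : ℕ) (hn : 1 ≤ n) :
    ∑ k ∈ Finset.Icc 1 n, (-1 : ℝ) ^ (k - 1) * (Nat.choose n k : ℝ) *
        (∑ j ∈ Finset.Icc 1 k, (1 : ℝ) / j) / k
      = ∑ k ∈ Finset.Icc 1 n, (1 : ℝ) / (k : ℝ) ^ 2 := by
  rw [icc_eq_range n _ (by simp), icc_eq_range n _ (by simp)]
  exact Skey n
end

section
/- For every positive integer n, ∑_{k=1}^n (-1)^{k-1} C(n,k) (1/k) ∑_{j=1}^k H_j/j = H_n^{(3)}. -/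
open Finset

lemma partial_alt (n : ℕ) (hn : 1 ≤ n) (j : ℕ) :
    ∑ k ∈ range (j+1), (-1:ℝ)^k * (n.choose k) = (-1)^j * ((n-1).choose j) := by
  cases n with
  | zero => omega
  | succ m =>
    induction j with
    | zero => simp
    | succ j ih =>
      rw [Finset.sum_range_succ, ih]
      have h : (m+1).choose (j+1) = m.choose j + m.choose (j+1) := Nat.choose_succ_succ m j
      simp only [Nat.add_sub_cancel]
      push_cast [h]
      ring

lemma tail_alt (n j : ℕ) (hn : 1 ≤ n) (hj : 1 ≤ j) (hjn : j ≤ n) :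
    ∑ k ∈ Icc j n, (-1:ℝ)^(k-1) * (n.choose k) = (-1)^(j-1) * ((n-1).choose (j-1)) := by
  have h1 : ∑ k ∈ Icc j n, (-1:ℝ)^k * (n.choose k)
      = ∑ k ∈ range (n+1), (-1:ℝ)^k * (n.choose k)
        - ∑ k ∈ range j, (-1:ℝ)^k * (n.choose k) := by
    have hc := Finset.sum_Ico_consecutive (fun k => (-1:ℝ)^k * (n.choose k))
      (Nat.zero_le j) (show j ≤ n+1 by omega)
    rw [← Finset.Ico_add_one_right_eq_Icc]
    simp only [range_eq_Ico, Nat.succ_eq_add_one] at *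
    linarith [hc]
  have hfull : ∑ k ∈ range (n+1), (-1:ℝ)^k * (n.choose k) = 0 := by
    rw [partial_alt n hn n, Nat.choose_eq_zero_of_lt (by omega)]
    simp
  have hj' : j = (j-1)+1 := by omega
  have hpart : ∑ k ∈ range j, (-1:ℝ)^k * (n.choose k) = (-1)^(j-1) * ((n-1).choose (j-1)) := by
    rw [hj']; exact partial_alt n hn (j-1)
  have h2 : ∑ k ∈ Icc j n, (-1:ℝ)^(k-1) * (n.choose k)
      = -∑ k ∈ Icc j n, (-1:ℝ)^k * (n.choose k) := by
    rw [← Finset.sum_neg_distrib]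
    apply Finset.sum_congr rfl
    intro k hk
    have hk1 : 1 ≤ k := le_trans hj (mem_Icc.mp hk).1
    have : k = (k-1)+1 := by omega
    rw [this]
    simp only [Nat.add_sub_cancel]
    rw [pow_succ]
    ring
  rw [h2, h1, hfull, hpart]
  ring

lemma choose_div (n i : ℕ) (h1 : 1 ≤ i) (h2 : i ≤ n) :
    (((n-1).choose (i-1) : ℝ)) = (n.choose i) * i / n := by
  have key : n * ((n-1).choose (i-1)) = n.choose i * i := by
    obtain ⟨m, rfl⟩ : ∃ m, n = m + 1 := ⟨n - 1, by omega⟩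
    obtain ⟨l, rfl⟩ : ∃ l, i = l + 1 := ⟨i - 1, by omega⟩
    simpa using Nat.add_one_mul_choose_eq m l
  have hn : (n:ℝ) ≠ 0 := Nat.cast_ne_zero.mpr (by omega)
  field_simp
  have := congrArg (fun x : ℕ => (x:ℝ)) key
  push_cast at this
  linarith [this]

lemma key_swap (n : ℕ) (hn : 1 ≤ n) (w : ℕ → ℝ) :
    ∑ k ∈ Icc 1 n, (-1:ℝ)^(k-1) * (n.choose k) * (∑ j ∈ Icc 1 k, w j)
      = (1/n) * ∑ j ∈ Icc 1 n, (-1:ℝ)^(j-1) * (n.choose j) * (j * w j) := by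
  have step1 : ∑ k ∈ Icc 1 n, (-1:ℝ)^(k-1) * (n.choose k) * (∑ j ∈ Icc 1 k, w j)
      = ∑ k ∈ Icc 1 n, ∑ j ∈ Icc 1 k, (-1:ℝ)^(k-1) * (n.choose k) * w j := by
    apply Finset.sum_congr rfl; intro k _; rw [Finset.mul_sum]
  rw [step1]
  rw [Finset.sum_comm' (t' := Icc 1 n) (s' := fun j => Icc j n)
    (by intro x y; simp only [mem_Icc]; omega)]
  rw [Finset.mul_sum]
  apply Finset.sum_congr rfl
  intro j hj
  obtain ⟨hj1, hjn⟩ := mem_Icc.mp hj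
  have : ∑ k ∈ Icc j n, (-1:ℝ)^(k-1) * (n.choose k) * w j
      = (∑ k ∈ Icc j n, (-1:ℝ)^(k-1) * (n.choose k)) * w j := by
    rw [Finset.sum_mul]
  rw [this, tail_alt n j hn hj1 hjn, choose_div n j hj1 hjn]
  have hjne : (j:ℝ) ≠ 0 := by positivity
  field_simp

lemma lemA (n : ℕ) (hn : 1 ≤ n) :
    ∑ k ∈ Icc 1 n, (-1:ℝ)^(k-1) * (n.choose k) * (∑ i ∈ Icc 1 k, (1:ℝ)/i) = 1/n := by
  rw [key_swap n hn (fun i => (1:ℝ)/i)]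
  have : ∑ j ∈ Icc 1 n, (-1:ℝ)^(j-1) * (n.choose j) * (j * (1/j))
      = ∑ j ∈ Icc 1 n, (-1:ℝ)^(j-1) * (n.choose j) := by
    apply Finset.sum_congr rfl
    intro j hj
    have hj1 : 1 ≤ j := (mem_Icc.mp hj).1
    have : (j:ℝ) ≠ 0 := by positivity
    field_simp
  rw [this, tail_alt n 1 hn le_rfl hn]
  simp

lemma lemB (n : ℕ) (hn : 1 ≤ n) :
    ∑ k ∈ Icc 1 n, (-1:ℝ)^(k-1) * (n.choose k) *
      (∑ j ∈ Icc 1 k, (∑ i ∈ Icc 1 j, (1:ℝ)/i)/j) = 1/(n:ℝ)^2 := by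
  rw [key_swap n hn (fun j => (∑ i ∈ Icc 1 j, (1:ℝ)/i)/j)]
  have : ∑ j ∈ Icc 1 n, (-1:ℝ)^(j-1) * (n.choose j) * (j * ((∑ i ∈ Icc 1 j, (1:ℝ)/i)/j))
      = ∑ j ∈ Icc 1 n, (-1:ℝ)^(j-1) * (n.choose j) * (∑ i ∈ Icc 1 j, (1:ℝ)/i) := by
    apply Finset.sum_congr rfl
    intro j hj
    have hj1 : 1 ≤ j := (mem_Icc.mp hj).1
    have : (j:ℝ) ≠ 0 := by positivity
    field_simp
  rw [this, lemA n hn]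
  have hnne : (n:ℝ) ≠ 0 := by positivity
  field_simp

theorem stmt_9 (n : ℕ) (hn : 1 ≤ n) :
    ∑ k ∈ Finset.Icc 1 n, (-1 : ℝ) ^ (k - 1) * (Nat.choose n k : ℝ) * (1 / (k : ℝ)) *
        (∑ j ∈ Finset.Icc 1 k, (∑ i ∈ Finset.Icc 1 j, (1 : ℝ) / i) / j)
      = ∑ k ∈ Finset.Icc 1 n, (1 : ℝ) / (k : ℝ) ^ 3 := by
  induction n, hn using Nat.le_induction with
  | base => norm_num
  | succ n hn ih =>
    have hpascal : ∀ k ∈ Icc 1 (n+1),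
        (-1:ℝ)^(k-1) * ((n+1).choose k : ℝ) * (1/(k:ℝ)) *
          (∑ j ∈ Icc 1 k, (∑ i ∈ Icc 1 j, (1:ℝ)/i)/j)
        = (-1:ℝ)^(k-1) * (n.choose k : ℝ) * (1/(k:ℝ)) *
            (∑ j ∈ Icc 1 k, (∑ i ∈ Icc 1 j, (1:ℝ)/i)/j)
          + (-1:ℝ)^(k-1) * (n.choose (k-1) : ℝ) * (1/(k:ℝ)) *
            (∑ j ∈ Icc 1 k, (∑ i ∈ Icc 1 j, (1:ℝ)/i)/j) := by
      intro k hk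
      obtain ⟨hk1, hkn⟩ := mem_Icc.mp hk
      obtain ⟨l, rfl⟩ : ∃ l, k = l + 1 := ⟨k - 1, by omega⟩
      have h : (n+1).choose (l+1) = n.choose l + n.choose (l+1) := Nat.choose_succ_succ n l
      rw [h]
      simp only [Nat.add_sub_cancel]
      push_cast
      ring
    rw [Finset.sum_congr rfl hpascal, Finset.sum_add_distrib]
    -- first sum: drop the top term (choose n (n+1) = 0) and apply ih
    have hfirst : ∑ k ∈ Icc 1 (n+1), (-1:ℝ)^(k-1) * (n.choose k : ℝ) * (1/(k:ℝ)) *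
          (∑ j ∈ Icc 1 k, (∑ i ∈ Icc 1 j, (1:ℝ)/i)/j)
        = ∑ k ∈ Icc 1 n, (-1:ℝ)^(k-1) * (n.choose k : ℝ) * (1/(k:ℝ)) *
          (∑ j ∈ Icc 1 k, (∑ i ∈ Icc 1 j, (1:ℝ)/i)/j) := by
      rw [Finset.sum_Icc_succ_top (by omega : 1 ≤ n+1)]
      rw [Nat.choose_eq_zero_of_lt (by omega)]
      norm_num
    have hsecond : ∑ k ∈ Icc 1 (n+1), (-1:ℝ)^(k-1) * (n.choose (k-1) : ℝ) * (1/(k:ℝ)) *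
          (∑ j ∈ Icc 1 k, (∑ i ∈ Icc 1 j, (1:ℝ)/i)/j)
        = 1/((n:ℝ)+1)^3 := by
      have hrw : ∀ k ∈ Icc 1 (n+1),
          (-1:ℝ)^(k-1) * (n.choose (k-1) : ℝ) * (1/(k:ℝ)) *
            (∑ j ∈ Icc 1 k, (∑ i ∈ Icc 1 j, (1:ℝ)/i)/j)
          = (1/((n:ℝ)+1)) * ((-1:ℝ)^(k-1) * ((n+1).choose k : ℝ) *
            (∑ j ∈ Icc 1 k, (∑ i ∈ Icc 1 j, (1:ℝ)/i)/j)) := by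
        intro k hk
        obtain ⟨hk1, hkn⟩ := mem_Icc.mp hk
        have h := choose_div (n+1) k (by omega) (by omega)
        simp only [Nat.add_sub_cancel] at h
        rw [h]
        have hk0 : (k:ℝ) ≠ 0 := by positivity
        have hn0 : ((n:ℝ)+1) ≠ 0 := by positivity
        push_cast
        field_simp
      rw [Finset.sum_congr rfl hrw, ← Finset.mul_sum, lemB (n+1) (by omega)]
      push_cast
      have hn0 : ((n:ℝ)+1) ≠ 0 := by positivity
      field_simp
    rw [hfirst, hsecond, ih, Finset.sum_Icc_succ_top (by omega : 1 ≤ n+1)]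
    push_cast
    ring
end

section
/- For all positive integers n, m, S_n(m) = ((-1)^{m-1}/(m-1)!) ∫_0^1 (1 - t^n) (log(1-t))^{m-1}/(1-t) dt, where S_n(m) = ∑_{k=1}^n C(n,k)(-1)^{k-1}/k^m. -/
open MeasureTheory Real Set

lemma image_exp_neg : (fun y : ℝ => Real.exp (-y)) '' (Set.Ioi 0) = Set.Ioo 0 1 := by
  ext x
  constructor
  · rintro ⟨y, hy, rfl⟩
    exact ⟨Real.exp_pos _, Real.exp_lt_one_iff.mpr (by simpa using (mem_Ioi.mp hy))⟩
  · rintro ⟨h0, h1⟩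
    exact ⟨-Real.log x, by simpa using Real.log_neg h0 h1, by simp [Real.exp_log h0]⟩

lemma hderiv_exp_neg : ∀ y ∈ Set.Ioi (0:ℝ),
    HasDerivWithinAt (fun y : ℝ => Real.exp (-y)) (-Real.exp (-y)) (Set.Ioi 0) y := by
  intro y _
  have h : HasDerivAt (fun y : ℝ => Real.exp (-y)) (Real.exp (-y) * (-1)) y :=
    (Real.hasDerivAt_exp (-y)).comp y (hasDerivAt_neg y)
  simpa using h.hasDerivWithinAt

lemma hinj_exp_neg : Set.InjOn (fun y : ℝ => Real.exp (-y)) (Set.Ioi 0) := by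
  intro a _ b _ h
  simpa using Real.exp_injective h

lemma pointwise_exp_neg (k p : ℕ) (hk : 1 ≤ k) : ∀ y ∈ Set.Ioi (0:ℝ),
    |(-Real.exp (-y))| • (Real.exp (-y) ^ (k-1) * Real.log (Real.exp (-y)) ^ p)
      = (-1:ℝ)^p * (y^p * Real.exp (-((k:ℝ)*y))) := by
  intro y _
  have h1 : |(-Real.exp (-y))| = Real.exp (-y) := by
    rw [abs_neg, abs_of_pos (Real.exp_pos _)]
  have h2 : Real.exp (-y) * Real.exp (-y) ^ (k-1) = Real.exp (-((k:ℝ)*y)) := by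
    rw [← pow_succ', Nat.sub_add_cancel hk, ← Real.exp_nat_mul]
    ring_nf
  rw [smul_eq_mul, h1, Real.log_exp, neg_pow, ← h2]
  ring

lemma integrable_aux (k p : ℕ) (hk : 1 ≤ k) :
    IntegrableOn (fun y : ℝ => y ^ p * Real.exp (-((k:ℝ)*y))) (Set.Ioi 0) := by
  have h := Real.GammaIntegral_convergent (s := (p:ℝ)+1) (by positivity)
  refine h.mono' ?_ ?_
  · exact (Continuous.mul (by fun_prop) (by fun_prop)).aestronglyMeasurable
  · filter_upwards [ae_restrict_mem measurableSet_Ioi] with y hy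
    have hy0 : 0 < y := hy
    have hrp : y ^ ((p:ℝ)+1-1) = y ^ p := by
      rw [add_sub_cancel_right, Real.rpow_natCast]
    rw [Real.norm_eq_abs, abs_of_nonneg (by positivity), hrp, mul_comm (Real.exp (-y))]
    have hk1 : (1:ℝ) ≤ k := by exact_mod_cast hk
    have : Real.exp (-((k:ℝ)*y)) ≤ Real.exp (-y) := by
      apply Real.exp_le_exp.mpr
      nlinarith
    exact mul_le_mul_of_nonneg_left this (by positivity)

lemma key_value (k p : ℕ) (hk : 1 ≤ k) :
    ∫ y in Set.Ioi (0:ℝ), y ^ p * Real.exp (-((k:ℝ)*y))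
      = (p.factorial : ℝ) / (k:ℝ)^(p+1) := by
  have hk0 : (0:ℝ) < k := by exact_mod_cast hk
  have h := Real.integral_rpow_mul_exp_neg_mul_Ioi (a := (p:ℝ)+1) (r := (k:ℝ))
    (by positivity) hk0
  have heq : Set.EqOn (fun y : ℝ => y ^ ((p:ℝ)+1-1) * Real.exp (-((k:ℝ)*y)))
      (fun y : ℝ => y ^ p * Real.exp (-((k:ℝ)*y))) (Set.Ioi 0) := by
    intro y hy
    simp [add_sub_cancel_right, Real.rpow_natCast]
  rw [← setIntegral_congr_fun measurableSet_Ioi heq, h, Real.Gamma_nat_eq_factorial]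
  rw [show ((p:ℝ)+1) = ((p+1:ℕ):ℝ) by push_cast; ring, Real.rpow_natCast, div_pow, one_pow]
  ring

lemma key (k p : ℕ) (hk : 1 ≤ k) :
    ∫ x in Set.Ioo (0:ℝ) 1, x ^ (k-1) * Real.log x ^ p
      = (-1:ℝ)^p * (p.factorial : ℝ) / (k:ℝ)^(p+1) := by
  rw [← image_exp_neg,
    integral_image_eq_integral_abs_deriv_smul measurableSet_Ioi hderiv_exp_neg hinj_exp_neg,
    setIntegral_congr_fun measurableSet_Ioi (pointwise_exp_neg k p hk),
    integral_const_mul, key_value k p hk]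
  ring

lemma key_integrable (k p : ℕ) (hk : 1 ≤ k) :
    IntegrableOn (fun x : ℝ => x ^ (k-1) * Real.log x ^ p) (Set.Ioo 0 1) := by
  rw [← image_exp_neg,
    integrableOn_image_iff_integrableOn_abs_deriv_smul measurableSet_Ioi hderiv_exp_neg
      hinj_exp_neg]
  exact IntegrableOn.congr_fun ((integrable_aux k p hk).const_mul ((-1:ℝ)^p))
    (fun y hy => ((pointwise_exp_neg k p hk) y hy).symm) measurableSet_Ioi


theorem stmt_10 (n m : ℕ) (hn : 1 ≤ n) (hm : 1 ≤ m) :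
    ∑ k ∈ Finset.Icc 1 n, (Nat.choose n k : ℝ) * (-1) ^ (k - 1) / (k : ℝ) ^ m
      = ((-1 : ℝ) ^ (m - 1) / Nat.factorial (m - 1)) *
          ∫ t in (0:ℝ)..1, (1 - t ^ n) * (Real.log (1 - t)) ^ (m - 1) / (1 - t) := by
  obtain ⟨p, rfl⟩ : ∃ p, m = p + 1 := ⟨m - 1, (Nat.succ_pred_eq_of_pos hm).symm⟩
  simp only [Nat.add_sub_cancel]
  -- Step A : substitution t ↦ 1 - t
  have hA : (∫ t in (0:ℝ)..1, (1 - t ^ n) * (Real.log (1 - t)) ^ p / (1 - t))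
      = ∫ u in Set.Ioo (0:ℝ) 1, (1 - (1-u)^n) * (Real.log u)^p / u := by
    have h1 : (fun t : ℝ => (1 - t ^ n) * (Real.log (1 - t)) ^ p / (1 - t))
        = fun t => (fun u : ℝ => (1 - (1-u)^n) * (Real.log u)^p / u) (1 - t) := by
      funext t; simp only [sub_sub_cancel]
    rw [h1, intervalIntegral.integral_comp_sub_left
      (fun u : ℝ => (1 - (1-u)^n) * (Real.log u)^p / u) 1]
    norm_num
    rw [intervalIntegral.integral_of_le zero_le_one, integral_Ioc_eq_integral_Ioo]
  rw [hA]
  -- Step B : binomial expansion of the integrand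
  have hbin : ∀ u ∈ Set.Ioo (0:ℝ) 1, (1 - (1-u)^n) * (Real.log u)^p / u
      = ∑ k ∈ Finset.Icc 1 n,
          ((n.choose k : ℝ) * (-1)^(k-1)) * (u^(k-1) * (Real.log u)^p) := by
    intro u hu
    have hu0 : u ≠ 0 := ne_of_gt hu.1
    have hpow : (1:ℝ) - (1-u)^n
        = ∑ k ∈ Finset.Icc 1 n, (n.choose k : ℝ) * (-1)^(k-1) * u^k := by
      have hb : ((-u) + 1)^n
          = ∑ k ∈ Finset.range (n+1), (-u)^k * 1^(n-k) * (n.choose k : ℝ) :=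
        add_pow (-u) 1 n
      rw [← Finset.Ico_add_one_right_eq_Icc, Finset.sum_Ico_eq_sum_range]
      have hb2 := Finset.sum_range_succ' (fun k => (-u)^k * 1^(n-k) * ((n.choose k : ℝ))) n
      have hb3 : (1-u)^n
          = (∑ i ∈ Finset.range n, (-u)^(i+1) * 1^(n-(i+1)) * (n.choose (i+1) : ℝ)) + 1 := by
        rw [show (1-u : ℝ) = -u + 1 by ring, hb, hb2]; simp
      rw [hb3, Nat.add_sub_cancel, show ∀ S:ℝ, 1 - (S+1) = -S from fun S => by ring,
        ← Finset.sum_neg_distrib]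
      apply Finset.sum_congr rfl
      intro i _
      have e1 : (1 + i) - 1 = i := by omega
      have e2 : (1 + i) = i + 1 := by omega
      rw [e1, e2, neg_pow]
      simp only [one_pow]
      ring
    rw [hpow, Finset.sum_mul, Finset.sum_div]
    apply Finset.sum_congr rfl
    intro k hk
    have hk1 : 1 ≤ k := (Finset.mem_Icc.mp hk).1
    have : u ^ k = u * u ^ (k-1) := by
      rw [← pow_succ', Nat.sub_add_cancel hk1]
    rw [this]
    field_simp
  rw [setIntegral_congr_fun measurableSet_Ioo hbin,
    integral_finset_sum _ (fun k hk =>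
      (key_integrable k p (Finset.mem_Icc.mp hk).1).const_mul _)]
  rw [Finset.mul_sum]
  apply Finset.sum_congr rfl
  intro k hk
  have hk1 : 1 ≤ k := (Finset.mem_Icc.mp hk).1
  rw [integral_const_mul, key k p hk1]
  have hkne : ((k:ℝ)) ≠ 0 := by
    have : (0:ℝ) < k := by exact_mod_cast hk1
    linarith
  have hfac : (p.factorial : ℝ) ≠ 0 := by exact_mod_cast p.factorial_ne_zero
  have h4 : ((-1:ℝ)^p) * ((-1:ℝ)^p) = 1 := by
    rw [← pow_add, ← two_mul, pow_mul]; norm_num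
  have hstep : (-1:ℝ)^p / (p.factorial:ℝ)
        * ((n.choose k : ℝ) * (-1)^(k-1) * ((-1:ℝ)^p * (p.factorial:ℝ) / (k:ℝ)^(p+1)))
      = (((-1:ℝ)^p * (-1:ℝ)^p)) * (((p.factorial:ℝ))/(p.factorial:ℝ))
        * ((n.choose k : ℝ) * (-1)^(k-1) / (k:ℝ)^(p+1)) := by ring
  rw [hstep, h4, div_self hfac]
  ring
end

section
/- For every positive integer n, S_n(2) = (H_n^2 + H_n^{(2)})/2, where S_n(2) = ∑_{k=1}^n C(n,k)(-1)^{k-1}/k^2. -/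
open Finset

lemma key_s11 (n j : ℕ) : ((n.choose j : ℝ)) * (n+1) = ((n+1).choose (j+1)) * (j+1) := by
  have h : ((n+1) * n.choose j : ℕ) = ((n+1).choose (j+1) * (j+1) : ℕ) := Nat.add_one_mul_choose_eq n j
  have h2 := congrArg (fun z : ℕ => (z:ℝ)) h
  push_cast at h2
  linarith

lemma auxA_s11 (m : ℕ) (hm : 1 ≤ m) :
    ∑ j ∈ range m, ((m.choose (j+1) : ℝ)) * (-1)^j = 1 := by
  have h := Int.alternating_sum_range_choose (n := m)
  rw [if_neg (by omega)] at h
  have h' : (∑ i ∈ range (m+1), (-1:ℝ)^i * m.choose i) = 0 := by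
    exact_mod_cast congrArg (fun z : ℤ => (z : ℝ)) h
  rw [Finset.sum_range_succ'] at h'
  simp only [pow_succ, Nat.choose_zero_right, Nat.cast_one, pow_zero, one_mul] at h'
  have : ∑ j ∈ range m, ((m.choose (j+1) : ℝ)) * (-1)^j
      = - ∑ i ∈ range m, (-1:ℝ)^i * -1 * (m.choose (i+1)) := by
    rw [← Finset.sum_neg_distrib]
    exact Finset.sum_congr rfl fun i _ => by ring
  rw [this]
  linarith

lemma shiftB (n : ℕ) :
    ∑ j ∈ range (n+1), ((n.choose j : ℝ)) * (-1)^j / (j+1)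
      = 1 / (n+1) := by
  have step : ∀ j ∈ range (n+1), ((n.choose j : ℝ)) * (-1)^j / (j+1)
      = (1/(n+1)) * ((((n+1).choose (j+1) : ℝ)) * (-1)^j) := by
    intro j _
    have hk := key_s11 n j
    have hj : ((j:ℝ)+1) ≠ 0 := by positivity
    have hn : ((n:ℝ)+1) ≠ 0 := by positivity
    field_simp
    linear_combination hk
  rw [Finset.sum_congr rfl step, ← Finset.mul_sum, auxA_s11 (n+1) (by omega)]
  push_cast
  ring

lemma auxB (n : ℕ) :
    ∑ j ∈ range n, ((n.choose (j+1) : ℝ)) * (-1)^j / (j+1)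
      = ∑ j ∈ range n, 1/((j:ℝ)+1) := by
  induction n with
  | zero => simp
  | succ n ih =>
    have split : ∀ j ∈ range (n+1), (((n+1).choose (j+1) : ℝ)) * (-1)^j / (j+1)
        = ((n.choose j : ℝ)) * (-1)^j / (j+1) + ((n.choose (j+1) : ℝ)) * (-1)^j / (j+1) := by
      intro j _
      rw [Nat.choose_succ_succ]
      push_cast; ring
    rw [Finset.sum_congr rfl split, Finset.sum_add_distrib, shiftB,
      Finset.sum_range_succ (f := fun j => ((n.choose (j+1) : ℝ)) * (-1)^j / (j+1)),
      Nat.choose_succ_self, ih, Finset.sum_range_succ]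
    push_cast
    ring

lemma shiftB2 (n : ℕ) :
    ∑ j ∈ range (n+1), ((n.choose j : ℝ)) * (-1)^j / (j+1)^2
      = (1/(n+1)) * ∑ j ∈ range (n+1), 1/((j:ℝ)+1) := by
  have step : ∀ j ∈ range (n+1), ((n.choose j : ℝ)) * (-1)^j / (j+1)^2
      = (1/(n+1)) * ((((n+1).choose (j+1) : ℝ)) * (-1)^j / (j+1)) := by
    intro j _
    have hk := key_s11 n j
    have hj : ((j:ℝ)+1) ≠ 0 := by positivity
    have hn : ((n:ℝ)+1) ≠ 0 := by positivity
    field_simp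
    linear_combination hk
  rw [Finset.sum_congr rfl step, ← Finset.mul_sum, auxB (n+1)]

lemma mainR (n : ℕ) :
    ∑ j ∈ range n, ((n.choose (j+1) : ℝ)) * (-1)^j / (j+1)^2
      = ((∑ j ∈ range n, 1/((j:ℝ)+1))^2 + ∑ j ∈ range n, 1/((j:ℝ)+1)^2)/2 := by
  induction n with
  | zero => simp
  | succ n ih =>
    have split : ∀ j ∈ range (n+1), (((n+1).choose (j+1) : ℝ)) * (-1)^j / (j+1)^2
        = ((n.choose j : ℝ)) * (-1)^j / (j+1)^2 + ((n.choose (j+1) : ℝ)) * (-1)^j / (j+1)^2 := by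
      intro j _
      rw [Nat.choose_succ_succ]
      push_cast; ring
    rw [Finset.sum_congr rfl split, Finset.sum_add_distrib, shiftB2,
      Finset.sum_range_succ (f := fun j => ((n.choose (j+1) : ℝ)) * (-1)^j / (j+1)^2),
      Nat.choose_succ_self, ih,
      Finset.sum_range_succ (f := fun j => 1/((j:ℝ)+1)),
      Finset.sum_range_succ (f := fun j => 1/((j:ℝ)+1)^2)]
    have hn : ((n:ℝ)+1) ≠ 0 := by positivity
    push_cast
    field_simp
    ring

theorem stmt_11 (n : ℕ) (hn : 1 ≤ n) :
    ∑ k ∈ Finset.Icc 1 n, (Nat.choose n k : ℝ) * (-1) ^ (k - 1) / (k : ℝ) ^ 2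
      = ((∑ k ∈ Finset.Icc 1 n, (1 : ℝ) / k) ^ 2 + ∑ k ∈ Finset.Icc 1 n, (1 : ℝ) / (k : ℝ) ^ 2) / 2 := by
  rw [← Finset.Ico_add_one_right_eq_Icc, Finset.sum_Ico_eq_sum_range, Finset.sum_Ico_eq_sum_range,
    Finset.sum_Ico_eq_sum_range]
  simp only [Nat.add_sub_cancel, Nat.succ_sub_one]
  have e1 : ∀ j ∈ range n, (Nat.choose n (1+j) : ℝ) * (-1) ^ ((1+j) - 1) / ((1+j : ℕ) : ℝ) ^ 2
      = ((n.choose (j+1) : ℝ)) * (-1)^j / ((j:ℝ)+1)^2 := by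
    intro j _
    have : (1+j) - 1 = j := by omega
    rw [this, Nat.add_comm 1 j]
    push_cast; ring
  rw [Finset.sum_congr rfl e1, mainR]
  congr 1
  congr 1
  · congr 1; exact Finset.sum_congr rfl fun j _ => by push_cast; ring
  · exact Finset.sum_congr rfl fun j _ => by push_cast; ring
end

section
/- For every positive integer n, S_n(3) = H_n^3/6 + H_n H_n^{(2)}/2 + H_n^{(3)}/3, where S_n(3) = ∑_{k=1}^n C(n,k)(-1)^{k-1}/k^3. -/
noncomputable def Hh (r n : ℕ) : ℝ := ∑ j ∈ Finset.range n, 1/((j:ℝ)+1)^r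

noncomputable def Ss (r n : ℕ) : ℝ :=
  ∑ j ∈ Finset.range n, (Nat.choose n (j+1) : ℝ) * (-1)^j / ((j:ℝ)+1)^r

lemma Hh_succ (r n : ℕ) : Hh r (n+1) = Hh r n + 1/((n:ℝ)+1)^r := by
  unfold Hh; rw [Finset.sum_range_succ]

lemma Ss0 (n : ℕ) (hn : 1 ≤ n) : Ss 0 n = 1 := by
  have h := Int.alternating_sum_range_choose (n := n)
  rw [if_neg (by omega)] at h
  have h' : (∑ i ∈ Finset.range (n+1), (-1:ℝ)^i * (Nat.choose n i)) = 0 := by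
    exact_mod_cast congrArg (Int.cast : ℤ → ℝ) h
  rw [Finset.sum_range_succ'] at h'
  simp only [pow_zero, Nat.choose_zero_right, Nat.cast_one, mul_one, one_mul] at h'
  unfold Ss
  have : ∑ j ∈ Finset.range n, (Nat.choose n (j+1) : ℝ) * (-1)^j / ((j:ℝ)+1)^0
      = ∑ j ∈ Finset.range n, -((-1:ℝ)^(j+1) * (Nat.choose n (j+1))) := by
    apply Finset.sum_congr rfl
    intro j _
    rw [pow_zero, div_one, pow_succ]
    ring
  rw [this, Finset.sum_neg_distrib]
  linarith [h']

lemma key_s12 (n r : ℕ) :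
    Ss (r+1) (n+1) = Ss (r+1) n + Ss r (n+1) / ((n:ℝ)+1) := by
  unfold Ss
  have h1 : ∀ j ∈ Finset.range (n+1),
      (Nat.choose (n+1) (j+1) : ℝ) * (-1)^j / ((j:ℝ)+1)^(r+1)
      = (Nat.choose n (j+1) : ℝ) * (-1)^j / ((j:ℝ)+1)^(r+1)
        + (Nat.choose (n+1) (j+1) : ℝ) * (-1)^j / ((j:ℝ)+1)^r / ((n:ℝ)+1) := by
    intro j _
    have hc : ((n:ℝ)+1) * (Nat.choose n j : ℝ) = (Nat.choose (n+1) (j+1) : ℝ) * ((j:ℝ)+1) := by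
      exact_mod_cast congrArg (Nat.cast : ℕ → ℝ) (Nat.add_one_mul_choose_eq n j)
    have hp : (Nat.choose (n+1) (j+1) : ℝ) = (Nat.choose n j : ℝ) + (Nat.choose n (j+1) : ℝ) := by
      exact_mod_cast congrArg (Nat.cast : ℕ → ℝ) (Nat.choose_succ_succ n j)
    have h2 : (Nat.choose n j : ℝ) * (-1)^j / ((j:ℝ)+1)^(r+1)
        = (Nat.choose (n+1) (j+1) : ℝ) * (-1)^j / ((j:ℝ)+1)^r / ((n:ℝ)+1) := by
      rw [pow_succ, div_div, div_eq_div_iff (by positivity) (by positivity)]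
      linear_combination ((-1:ℝ)^j * ((j:ℝ)+1)^r) * hc
    linear_combination h2 + ((-1:ℝ)^j / ((j:ℝ)+1)^(r+1)) * hp
  rw [Finset.sum_congr rfl h1, Finset.sum_add_distrib, ← Finset.sum_div]
  congr 1
  rw [Finset.sum_range_succ]
  simp [Nat.choose_succ_self]

lemma Ss1 (n : ℕ) : Ss 1 n = Hh 1 n := by
  induction n with
  | zero => simp [Ss, Hh]
  | succ m ih =>
    rw [key_s12 m 0, Ss0 (m+1) (by omega), ih, Hh_succ]
    push_cast
    ring

lemma Ss2 (n : ℕ) : Ss 2 n = ((Hh 1 n)^2 + Hh 2 n) / 2 := by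
  induction n with
  | zero => simp [Ss, Hh]
  | succ m ih =>
    rw [key_s12 m 1, Ss1, ih, Hh_succ, Hh_succ]
    have h : ((m:ℝ)+1) ≠ 0 := by positivity
    field_simp
    ring

lemma Ss3 (n : ℕ) :
    Ss 3 n = (Hh 1 n)^3/6 + Hh 1 n * Hh 2 n / 2 + Hh 3 n / 3 := by
  induction n with
  | zero => simp [Ss, Hh]
  | succ m ih =>
    rw [key_s12 m 2, Ss2, ih, Hh_succ, Hh_succ, Hh_succ]
    have h : ((m:ℝ)+1) ≠ 0 := by positivity
    field_simp
    ring

lemma Icc_to_range (f : ℕ → ℝ) (n : ℕ) :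
    ∑ k ∈ Finset.Icc 1 n, f k = ∑ j ∈ Finset.range n, f (j+1) := by
  rw [← Finset.Ico_add_one_right_eq_Icc, Finset.sum_Ico_eq_sum_range]
  simp [add_comm]

theorem stmt_12 (n : ℕ) (hn : 1 ≤ n) :
    ∑ k ∈ Finset.Icc 1 n, (Nat.choose n k : ℝ) * (-1) ^ (k - 1) / (k : ℝ) ^ 3
      = (∑ k ∈ Finset.Icc 1 n, (1 : ℝ) / k) ^ 3 / 6
        + (∑ k ∈ Finset.Icc 1 n, (1 : ℝ) / k) * (∑ k ∈ Finset.Icc 1 n, (1 : ℝ) / (k : ℝ) ^ 2) / 2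
        + (∑ k ∈ Finset.Icc 1 n, (1 : ℝ) / (k : ℝ) ^ 3) / 3 := by
  have hL : ∑ k ∈ Finset.Icc 1 n, (Nat.choose n k : ℝ) * (-1) ^ (k - 1) / (k : ℝ) ^ 3
      = Ss 3 n := by
    rw [Icc_to_range]
    apply Finset.sum_congr rfl
    intro j _
    push_cast
    norm_num
  have h1 : ∑ k ∈ Finset.Icc 1 n, (1 : ℝ) / k = Hh 1 n := by
    rw [Icc_to_range]; unfold Hh
    apply Finset.sum_congr rfl; intro j _; push_cast; norm_num
  have h2 : ∑ k ∈ Finset.Icc 1 n, (1 : ℝ) / (k : ℝ) ^ 2 = Hh 2 n := by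
    rw [Icc_to_range]; unfold Hh
    apply Finset.sum_congr rfl; intro j _; push_cast; norm_num
  have h3 : ∑ k ∈ Finset.Icc 1 n, (1 : ℝ) / (k : ℝ) ^ 3 = Hh 3 n := by
    rw [Icc_to_range]; unfold Hh
    apply Finset.sum_congr rfl; intro j _; push_cast; norm_num
  rw [hL, h1, h2, h3, Ss3]
end
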